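/- For the independent uniform hashing rank variables r_1,...,r_n, E((r_1 + ... + r_n)^2) = (n+1)^2·(H_n^2 − H_n^{(2)}) − (n+1)(2n+1)·H_n + n(3n+4). -/

import Mathlib

/-- `q n k j = C(k-1,j)/C(n,j)`, the probability that rank `r_k` exceeds `j`
in uniform hashing on a table of size `n`. -/
def hashTail (n k j : ℕ) : ℚ := (Nat.choose (k - 1) j : ℚ) / (Nat.choose n j : ℚ)

open Finset

private def qq (n m j : ℕ) : ℚ := (Nat.choose m j : ℚ) / (Nat.choose n j : ℚ)

private lemma chne {n j : ℕ} (h : j ≤ n) : ((Nat.choose n j : ℚ)) ≠ 0 :=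
  Nat.cast_ne_zero.mpr (Nat.choose_pos h).ne'

private lemma qq_eq {n m j : ℕ} (hm : m < n) (hj : j < n) :
    qq n m j = (Nat.choose (n - j) (n - m) : ℚ) / (Nat.choose n m : ℚ) := by
  rcases le_or_gt j m with h | h
  · rw [qq, div_eq_div_iff (chne (by omega)) (chne hm.le)]
    have key := Nat.choose_mul (n := n) (k := m) (s := j) h
    have hsymm : Nat.choose (n - j) (m - j) = Nat.choose (n - j) (n - m) := by
      have h1 : n - m = (n - j) - (m - j) := by omega
      rw [h1, Nat.choose_symm (by omega)]
    have : Nat.choose m j * Nat.choose n m = Nat.choose (n - j) (n - m) * Nat.choose n j := by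
      rw [← hsymm, Nat.mul_comm (Nat.choose m j), key, Nat.mul_comm]
    exact_mod_cast congrArg (Nat.cast : ℕ → ℚ) this
  · have h1 : Nat.choose m j = 0 := Nat.choose_eq_zero_of_lt h
    have h2 : Nat.choose (n - j) (n - m) = 0 := Nat.choose_eq_zero_of_lt (by omega)
    simp [qq, h1, h2]

private lemma hockey1 (n t : ℕ) (ht : 1 ≤ t) :
    ∑ j ∈ range n, (Nat.choose (j + 1) t : ℚ) = (Nat.choose (n + 1) (t + 1) : ℚ) := by
  induction n with
  | zero => simp [Nat.choose_eq_zero_of_lt (show 1 < t + 1 by omega)]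
  | succ n ih =>
    rw [Finset.sum_range_succ, ih]
    have : Nat.choose (n + 2) (t + 1) = Nat.choose (n + 1) t + Nat.choose (n + 1) (t + 1) :=
      Nat.choose_succ_succ' (n + 1) t
    push_cast [this]; ring

private lemma hockey2 (n t : ℕ) (ht : 1 ≤ t) :
    ∑ j ∈ range n, ((j : ℚ) + 1) * (Nat.choose (j + 1) t : ℚ)
      = ((t : ℚ) + 1) * (Nat.choose (n + 2) (t + 2) : ℚ) - (Nat.choose (n + 1) (t + 1) : ℚ) := by
  induction n with
  | zero =>
    simp [Nat.choose_eq_zero_of_lt (show 1 < t + 1 by omega),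
      Nat.choose_eq_zero_of_lt (show 2 < t + 2 by omega)]
  | succ n ih =>
    rw [Finset.sum_range_succ, ih]
    have p1 : (Nat.choose (n + 3) (t + 2) : ℚ)
        = Nat.choose (n + 2) (t + 1) + Nat.choose (n + 2) (t + 2) := by
      exact_mod_cast congrArg (Nat.cast : ℕ → ℚ) (Nat.choose_succ_succ' (n + 2) (t + 1))
    have p2 : ((n : ℚ) + 2) * Nat.choose (n + 1) t
        = (Nat.choose (n + 2) (t + 1) : ℚ) * ((t : ℚ) + 1) := by
      exact_mod_cast congrArg (Nat.cast : ℕ → ℚ) (Nat.add_one_mul_choose_eq (n + 1) t)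
    have p3 : (Nat.choose (n + 2) (t + 1) : ℚ)
        = Nat.choose (n + 1) t + Nat.choose (n + 1) (t + 1) := by
      exact_mod_cast congrArg (Nat.cast : ℕ → ℚ) (Nat.choose_succ_succ' (n + 1) t)
    push_cast
    linear_combination (-(t : ℚ) - 1) * p1 + p2 + p3

-- key cast facts
private lemma K1 {n m : ℕ} (hm : m < n) :
    (Nat.choose (n + 1) (n - m + 1) : ℚ) * ((n : ℚ) - m + 1)
      = ((n : ℚ) + 1) * (Nat.choose n m : ℚ) := by
  have h1 : (n + 1) * Nat.choose n (n - m) = Nat.choose (n + 1) (n - m + 1) * (n - m + 1) :=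
    Nat.add_one_mul_choose_eq n (n - m)
  have h2 : Nat.choose n (n - m) = Nat.choose n m := Nat.choose_symm hm.le
  have hc : ((n - m : ℕ) : ℚ) = (n : ℚ) - m := by
    push_cast [Nat.cast_sub hm.le]; ring
  rw [h2] at h1
  have := congrArg (Nat.cast : ℕ → ℚ) h1
  push_cast at this
  rw [hc] at this; linarith

private lemma K2 {n m : ℕ} (hm : m < n) :
    (Nat.choose (n + 2) (n - m + 2) : ℚ) * ((n : ℚ) - m + 2)
      = ((n : ℚ) + 2) * (Nat.choose (n + 1) (n - m + 1) : ℚ) := by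
  have h1 : (n + 2) * Nat.choose (n + 1) (n - m + 1)
      = Nat.choose (n + 2) (n - m + 2) * (n - m + 2) := Nat.add_one_mul_choose_eq (n + 1) (n - m + 1)
  have hc : ((n - m : ℕ) : ℚ) = (n : ℚ) - m := by
    push_cast [Nat.cast_sub hm.le]; ring
  have := congrArg (Nat.cast : ℕ → ℚ) h1
  push_cast at this
  rw [← hc] at *; linarith

private lemma S1 {n m : ℕ} (hm : m < n) :
    ∑ j ∈ range n, qq n m j = ((n : ℚ) + 1) / ((n : ℚ) - m + 1) := by
  set t := n - m with ht
  have ht1 : 1 ≤ t := by omega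
  have step : ∑ j ∈ range n, qq n m j
      = (∑ j ∈ range n, (Nat.choose (n - j) t : ℚ)) / (Nat.choose n m : ℚ) := by
    rw [Finset.sum_div]
    exact Finset.sum_congr rfl fun j hj => qq_eq hm (Finset.mem_range.mp hj)
  have refl : ∑ j ∈ range n, (Nat.choose (n - j) t : ℚ)
      = ∑ j ∈ range n, (Nat.choose (j + 1) t : ℚ) := by
    rw [← Finset.sum_range_reflect (fun j => (Nat.choose (j + 1) t : ℚ)) n]
    exact Finset.sum_congr rfl fun j hj => by
      have := Finset.mem_range.mp hj
      congr 2; omega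
  rw [step, refl, hockey1 n t ht1]
  have hc : ((t : ℕ) : ℚ) = (n : ℚ) - m := by push_cast [Nat.cast_sub hm.le, ht]; ring
  rw [div_eq_div_iff (chne hm.le) (by rw [← hc]; push_cast; positivity)]
  have := K1 hm
  rw [← hc] at *
  push_cast
  linarith

private lemma S2 {n m : ℕ} (hm : m < n) :
    ∑ j ∈ range n, (j : ℚ) * qq n m j
      = ((n : ℚ) + 1) ^ 2 / ((n : ℚ) - m + 1)
        - ((n : ℚ) + 1) * ((n : ℚ) + 2) / ((n : ℚ) - m + 2) := by
  have ht1 : 1 ≤ n - m := by omega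
  have hc : ((n - m : ℕ) : ℚ) = (n : ℚ) - m := by push_cast [Nat.cast_sub hm.le]; ring
  have d1 : (((n - m : ℕ) : ℚ) + 1) ≠ 0 := by positivity
  have d2 : (((n - m : ℕ) : ℚ) + 2) ≠ 0 := by positivity
  have step : ∑ j ∈ range n, (j : ℚ) * qq n m j
      = (∑ j ∈ range n, (j : ℚ) * (Nat.choose (n - j) (n - m) : ℚ)) / (Nat.choose n m : ℚ) := by
    rw [Finset.sum_div]
    refine Finset.sum_congr rfl fun j hj => ?_
    rw [qq_eq hm (Finset.mem_range.mp hj), mul_div_assoc]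
  have hrefl : ∑ j ∈ range n, (j : ℚ) * (Nat.choose (n - j) (n - m) : ℚ)
      = ∑ j ∈ range n, ((n : ℚ) - 1 - j) * (Nat.choose (j + 1) (n - m) : ℚ) := by
    rw [← Finset.sum_range_reflect (fun j => ((n : ℚ) - 1 - j) * (Nat.choose (j + 1) (n - m) : ℚ)) n]
    refine Finset.sum_congr rfl fun j hj => ?_
    have hj' := Finset.mem_range.mp hj
    have e1 : n - 1 - j + 1 = n - j := by omega
    have e2 : ((n - 1 - j : ℕ) : ℚ) = (n : ℚ) - 1 - j := by
      push_cast [Nat.cast_sub (by omega : j ≤ n - 1), Nat.cast_sub (by omega : 1 ≤ n)]; ring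
    rw [e1, e2]; ring
  have expand : ∑ j ∈ range n, ((n : ℚ) - 1 - j) * (Nat.choose (j + 1) (n - m) : ℚ)
      = (n : ℚ) * (Nat.choose (n + 1) (n - m + 1) : ℚ)
        - ((((n - m : ℕ) : ℚ) + 1) * (Nat.choose (n + 2) (n - m + 2) : ℚ)
            - (Nat.choose (n + 1) (n - m + 1) : ℚ)) := by
    have : ∀ j ∈ range n, ((n : ℚ) - 1 - j) * (Nat.choose (j + 1) (n - m) : ℚ)
        = (n : ℚ) * (Nat.choose (j + 1) (n - m) : ℚ) - ((j : ℚ) + 1) * (Nat.choose (j + 1) (n - m) : ℚ) := by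
      intro j _; ring
    rw [Finset.sum_congr rfl this, Finset.sum_sub_distrib, ← Finset.mul_sum,
      hockey1 n (n - m) ht1, hockey2 n (n - m) ht1]
  have k1 := K1 hm
  have k2 := K2 hm
  rw [← hc] at k1 k2
  have A : (Nat.choose (n + 1) (n - m + 1) : ℚ) / (Nat.choose n m : ℚ)
      = ((n : ℚ) + 1) / (((n - m : ℕ) : ℚ) + 1) := by
    rw [div_eq_div_iff (chne hm.le) d1]; linarith
  have B : (Nat.choose (n + 2) (n - m + 2) : ℚ) / (Nat.choose n m : ℚ)
      = ((n : ℚ) + 1) * ((n : ℚ) + 2) / ((((n - m : ℕ) : ℚ) + 1) * (((n - m : ℕ) : ℚ) + 2)) := by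
    rw [div_eq_div_iff (chne hm.le) (mul_ne_zero d1 d2)]
    linear_combination (((n - m : ℕ) : ℚ) + 1) * k2 + ((n : ℚ) + 2) * k1
  rw [step, hrefl, expand]
  have split : ((n : ℚ) * (Nat.choose (n + 1) (n - m + 1) : ℚ)
        - ((((n - m : ℕ) : ℚ) + 1) * (Nat.choose (n + 2) (n - m + 2) : ℚ)
            - (Nat.choose (n + 1) (n - m + 1) : ℚ))) / (Nat.choose n m : ℚ)
      = ((n : ℚ) + 1) * ((Nat.choose (n + 1) (n - m + 1) : ℚ) / (Nat.choose n m : ℚ))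
        - (((n - m : ℕ) : ℚ) + 1) * ((Nat.choose (n + 2) (n - m + 2) : ℚ) / (Nat.choose n m : ℚ)) := by
    ring
  rw [split, A, B, ← hc]
  field_simp

private lemma qq_zero (n k : ℕ) : qq n k 0 = 1 := by simp [qq]
private lemma qq_top {n k : ℕ} (hk : k < n) : qq n k n = 0 := by
  simp [qq, Nat.choose_eq_zero_of_lt hk]

private lemma M0 {n k : ℕ} (hk : k < n) :
    ∑ j ∈ range n, (qq n k j - qq n k (j + 1)) = 1 := by
  rw [Finset.sum_range_sub' (qq n k) n, qq_zero, qq_top hk]; ring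

private lemma M1 {n k : ℕ} (hk : k < n) :
    ∑ j ∈ range n, (qq n k j - qq n k (j + 1)) * ((j : ℚ) + 1)
      = ∑ j ∈ range n, qq n k j := by
  have key : ∀ j ∈ range n, (qq n k j - qq n k (j + 1)) * ((j : ℚ) + 1)
      = (qq n k j * (j : ℚ) - qq n k (j + 1) * ((j + 1 : ℕ) : ℚ)) + qq n k j := by
    intro j _; push_cast; ring
  rw [Finset.sum_congr rfl key, Finset.sum_add_distrib,
    Finset.sum_range_sub' (fun j => qq n k j * ((j : ℕ) : ℚ)) n, qq_top hk]
  simp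

private lemma M2 {n k : ℕ} (hk : k < n) :
    ∑ j ∈ range n, (qq n k j - qq n k (j + 1)) * ((j : ℚ) + 1) ^ 2
      = ∑ j ∈ range n, qq n k j * (2 * (j : ℚ) + 1) := by
  have key : ∀ j ∈ range n, (qq n k j - qq n k (j + 1)) * ((j : ℚ) + 1) ^ 2
      = (qq n k j * ((j : ℚ)) ^ 2 - qq n k (j + 1) * (((j + 1 : ℕ) : ℚ)) ^ 2)
        + qq n k j * (2 * (j : ℚ) + 1) := by
    intro j _; push_cast; ring
  rw [Finset.sum_congr rfl key, Finset.sum_add_distrib,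
    Finset.sum_range_sub' (fun j => qq n k j * ((j : ℕ) : ℚ) ^ 2) n, qq_top hk]
  simp

private lemma indep_square (n : ℕ) (p : Fin n → Fin n → ℚ) (f : Fin n → ℚ)
    (h1 : ∀ m, ∑ j : Fin n, p m j = 1) :
    ∑ r : Fin n → Fin n, (∏ k, p k (r k)) * (∑ k, f (r k)) ^ 2
      = (∑ k : Fin n, ∑ j : Fin n, p k j * f j) ^ 2
        + ∑ k : Fin n, ((∑ j : Fin n, p k j * f j ^ 2) - (∑ j : Fin n, p k j * f j) ^ 2) := by
  classical
  set Ev : Fin n → ℚ := fun k => ∑ j : Fin n, p k j * f j with hEv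
  set E2v : Fin n → ℚ := fun k => ∑ j : Fin n, p k j * f j ^ 2 with hE2v
  have diag : ∀ k : Fin n,
      (∑ r : Fin n → Fin n, (∏ m, p m (r m)) * (f (r k) * f (r k))) = E2v k := by
    intro k
    have h1' : ∀ r : Fin n → Fin n, (∏ m, p m (r m)) * (f (r k) * f (r k))
        = ∏ m, (p m (r m) * (if m = k then f (r m) ^ 2 else 1)) := by
      intro r
      rw [Finset.prod_mul_distrib, Finset.prod_ite_eq' Finset.univ k (fun m => f (r m) ^ 2)]
      simp [sq]
    rw [Finset.sum_congr rfl fun r _ => h1' r,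
      ← Fintype.prod_sum (fun m j => p m j * (if m = k then f j ^ 2 else 1))]
    rw [Finset.prod_eq_single k (fun b _ hb => by
        simp only [if_neg hb, mul_one]; exact h1 b) (by simp)]
    simp [hE2v]
  have offd : ∀ k l : Fin n, k ≠ l →
      (∑ r : Fin n → Fin n, (∏ m, p m (r m)) * (f (r k) * f (r l))) = Ev k * Ev l := by
    intro k l hkl
    have h1' : ∀ r : Fin n → Fin n, (∏ m, p m (r m)) * (f (r k) * f (r l))
        = ∏ m, (p m (r m) * ((if m = k then f (r m) else 1) * (if m = l then f (r m) else 1))) := by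
      intro r
      rw [Finset.prod_mul_distrib, Finset.prod_mul_distrib,
        Finset.prod_ite_eq' Finset.univ k (fun m => f (r m)),
        Finset.prod_ite_eq' Finset.univ l (fun m => f (r m))]
      simp
    rw [Finset.sum_congr rfl fun r _ => h1' r,
      ← Fintype.prod_sum (fun m j => p m j * ((if m = k then f j else 1) * (if m = l then f j else 1)))]
    have h2 : ∀ m : Fin n,
        (∑ j : Fin n, p m j * ((if m = k then f j else 1) * (if m = l then f j else 1)))
          = (if m = k then Ev k else 1) * (if m = l then Ev l else 1) := by
      intro m
      by_cases hk : m = k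
      · subst hk; simp [hkl, hEv]
      · by_cases hl : m = l
        · subst hl; simp [hk, hEv]
        · simp [hk, hl, h1 m]
    rw [Finset.prod_congr rfl fun m _ => h2 m, Finset.prod_mul_distrib,
      Finset.prod_ite_eq' Finset.univ k (fun _ => Ev k),
      Finset.prod_ite_eq' Finset.univ l (fun _ => Ev l)]
    simp
  have step1 : ∑ r : Fin n → Fin n, (∏ k, p k (r k)) * (∑ k, f (r k)) ^ 2
      = ∑ k : Fin n, ∑ l : Fin n,
          ∑ r : Fin n → Fin n, (∏ m, p m (r m)) * (f (r k) * f (r l)) := by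
    have e : ∀ r : Fin n → Fin n, (∏ k, p k (r k)) * (∑ k, f (r k)) ^ 2
        = ∑ k : Fin n, ∑ l : Fin n, (∏ m, p m (r m)) * (f (r k) * f (r l)) := by
      intro r
      rw [sq, Finset.sum_mul_sum, Finset.mul_sum]
      exact Finset.sum_congr rfl fun k _ => by rw [Finset.mul_sum]
    rw [Finset.sum_congr rfl fun r _ => e r, Finset.sum_comm]
    exact Finset.sum_congr rfl fun k _ => Finset.sum_comm
  have step2 : ∀ k l : Fin n,
      (∑ r : Fin n → Fin n, (∏ m, p m (r m)) * (f (r k) * f (r l)))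
        = Ev k * Ev l + (if k = l then E2v k - Ev k ^ 2 else 0) := by
    intro k l
    by_cases h : k = l
    · subst h; rw [diag k, if_pos rfl]; ring
    · rw [offd k l h, if_neg h]; ring
  rw [step1, Finset.sum_congr rfl fun k _ => Finset.sum_congr rfl fun l _ => step2 k l]
  have split : ∀ k : Fin n,
      (∑ l : Fin n, (Ev k * Ev l + (if k = l then E2v k - Ev k ^ 2 else 0)))
        = Ev k * (∑ l, Ev l) + (E2v k - Ev k ^ 2) := by
    intro k
    rw [Finset.sum_add_distrib, ← Finset.mul_sum,
      Finset.sum_ite_eq Finset.univ k (fun _ => E2v k - Ev k ^ 2), if_pos (Finset.mem_univ k)]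
  rw [Finset.sum_congr rfl fun k _ => split k, Finset.sum_add_distrib, ← Finset.sum_mul, sq]

private lemma refgen (n : ℕ) (g : ℚ → ℚ) :
    ∑ i ∈ range n, g ((n : ℚ) - i) = ∑ i ∈ range n, g ((i : ℚ) + 1) := by
  rw [← Finset.sum_range_reflect (fun i => g ((i : ℚ) + 1)) n]
  refine Finset.sum_congr rfl fun j hj => ?_
  have hj' := Finset.mem_range.mp hj
  have : ((n - 1 - j : ℕ) : ℚ) = (n : ℚ) - 1 - j := by
    have h1 : n - 1 - j = n - (1 + j) := by omega
    rw [h1, Nat.cast_sub (by omega)]; push_cast; ring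
  rw [this]; ring_nf

private lemma iccToRange (n : ℕ) (F : ℕ → ℚ) :
    ∑ j ∈ Icc 1 n, F j = ∑ i ∈ range n, F (i + 1) := by
  induction n with
  | zero => simp
  | succ n ih => rw [Finset.sum_Icc_succ_top (by omega), ih, Finset.sum_range_succ]

private lemma sh1 (n : ℕ) :
    ∑ i ∈ range n, (1 : ℚ) / ((i : ℚ) + 1 + 1)
      = (∑ i ∈ range n, (1 : ℚ) / ((i : ℚ) + 1)) + 1 / ((n : ℚ) + 1) - 1 := by
  have a := Finset.sum_range_succ' (fun i => (1 : ℚ) / ((i : ℚ) + 1)) n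
  have a' : ∑ k ∈ range n, (1 : ℚ) / (((k + 1 : ℕ) : ℚ) + 1)
      = ∑ i ∈ range n, (1 : ℚ) / ((i : ℚ) + 1 + 1) :=
    Finset.sum_congr rfl fun i _ => by push_cast; ring_nf
  have b := Finset.sum_range_succ (fun i => (1 : ℚ) / ((i : ℚ) + 1)) n
  rw [b, a'] at a
  norm_num at a
  simp only [one_div] at a ⊢
  linarith

private lemma sh2 (n : ℕ) :
    ∑ i ∈ range n, ((1 : ℚ) / ((i : ℚ) + 1 + 1)) ^ 2
      = (∑ i ∈ range n, ((1 : ℚ) / ((i : ℚ) + 1)) ^ 2) + (1 / ((n : ℚ) + 1)) ^ 2 - 1 := by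
  have a := Finset.sum_range_succ' (fun i => ((1 : ℚ) / ((i : ℚ) + 1)) ^ 2) n
  have a' : ∑ k ∈ range n, ((1 : ℚ) / (((k + 1 : ℕ) : ℚ) + 1)) ^ 2
      = ∑ i ∈ range n, ((1 : ℚ) / ((i : ℚ) + 1 + 1)) ^ 2 :=
    Finset.sum_congr rfl fun i _ => by push_cast; ring_nf
  have b := Finset.sum_range_succ (fun i => ((1 : ℚ) / ((i : ℚ) + 1)) ^ 2) n
  rw [b, a'] at a
  norm_num at a
  simp only [one_div, ← inv_pow] at a ⊢
  linarith

private lemma sh3 (n : ℕ) :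
    ∑ i ∈ range n, (1 : ℚ) / ((i : ℚ) + 1 + 2)
      = (∑ i ∈ range n, (1 : ℚ) / ((i : ℚ) + 1)) + 1 / ((n : ℚ) + 1) + 1 / ((n : ℚ) + 2)
        - 3 / 2 := by
  have a := Finset.sum_range_succ' (fun i => (1 : ℚ) / ((i : ℚ) + 1)) (n + 1)
  have a1' : ∑ k ∈ range (n + 1), (1 : ℚ) / (((k + 1 : ℕ) : ℚ) + 1)
      = ∑ i ∈ range (n + 1), (1 : ℚ) / ((i : ℚ) + 2) :=
    Finset.sum_congr rfl fun i _ => by push_cast; ring_nf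
  have a2 := Finset.sum_range_succ' (fun i => (1 : ℚ) / ((i : ℚ) + 2)) n
  have a2' : ∑ k ∈ range n, (1 : ℚ) / (((k + 1 : ℕ) : ℚ) + 2)
      = ∑ i ∈ range n, (1 : ℚ) / ((i : ℚ) + 1 + 2) :=
    Finset.sum_congr rfl fun i _ => by push_cast; ring_nf
  have b := Finset.sum_range_succ (fun i => (1 : ℚ) / ((i : ℚ) + 1)) (n + 1)
  have b2 := Finset.sum_range_succ (fun i => (1 : ℚ) / ((i : ℚ) + 1)) n
  rw [a1'] at a
  rw [a2'] at a2
  rw [b2] at b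
  rw [b] at a
  norm_num at a a2
  simp only [one_div] at a a2 ⊢
  have hc : ((n : ℚ) + 1 + 1)⁻¹ = ((n : ℚ) + 2)⁻¹ := by ring_nf
  linarith

/-- The expectation of `(r_1 + ⋯ + r_n)²` over the joint (independent) distribution,
where trader `k+1` gets rank `r k + 1` with probability `q_{k,j-1} - q_{k,j}`. -/
theorem expected_square_of_rank_sum (n : ℕ) (hn : 1 ≤ n) :
    (∑ r : Fin n → Fin n,
        (∏ k : Fin n,
            (hashTail n (k.1 + 1) (r k).1 - hashTail n (k.1 + 1) ((r k).1 + 1))) *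
          (∑ k : Fin n, ((r k).1 + 1 : ℚ)) ^ 2) =
      ((n : ℚ) + 1) ^ 2 *
          ((∑ j ∈ Finset.Icc 1 n, (1 : ℚ) / (j : ℚ)) ^ 2 -
            ∑ j ∈ Finset.Icc 1 n, (1 : ℚ) / ((j : ℚ) ^ 2)) -
        ((n : ℚ) + 1) * (2 * (n : ℚ) + 1) * (∑ j ∈ Finset.Icc 1 n, (1 : ℚ) / (j : ℚ)) +
        (n : ℚ) * (3 * (n : ℚ) + 4) := by
  classical
  have hq : ∀ (k j : Fin n),
      hashTail n (k.1 + 1) j.1 - hashTail n (k.1 + 1) (j.1 + 1)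
        = qq n k.1 j.1 - qq n k.1 (j.1 + 1) := by
    intro k j; simp [hashTail, qq]
  have sumOne : ∀ m : Fin n, ∑ j : Fin n, (qq n m.1 j.1 - qq n m.1 (j.1 + 1)) = 1 := by
    intro m
    have h := M0 (n := n) (k := m.1) m.isLt
    rw [← Fin.sum_univ_eq_sum_range (fun j => qq n m.1 j - qq n m.1 (j + 1)) n] at h
    exact h
  have key := indep_square n (fun k j => qq n k.1 j.1 - qq n k.1 (j.1 + 1))
      (fun j => ((j : Fin n).1 : ℚ) + 1) sumOne
  have e1 : ∀ r : Fin n → Fin n,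
      (∏ k : Fin n, (hashTail n (k.1 + 1) (r k).1 - hashTail n (k.1 + 1) ((r k).1 + 1)))
        = ∏ k : Fin n, (qq n k.1 (r k).1 - qq n k.1 ((r k).1 + 1)) :=
    fun r => Finset.prod_congr rfl fun k _ => hq k (r k)
  simp only [e1]
  rw [key]
  have EvVal : ∀ k : Fin n,
      (∑ j : Fin n, (qq n k.1 j.1 - qq n k.1 (j.1 + 1)) * ((j.1 : ℚ) + 1))
        = ((n : ℚ) + 1) / ((n : ℚ) - (k.1 : ℚ) + 1) := by
    intro k
    have h := Fin.sum_univ_eq_sum_range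
      (fun t => (qq n k.1 t - qq n k.1 (t + 1)) * ((t : ℚ) + 1)) n
    exact h.trans (by rw [M1 k.isLt, S1 k.isLt])
  have E2Val : ∀ k : Fin n,
      (∑ j : Fin n, (qq n k.1 j.1 - qq n k.1 (j.1 + 1)) * ((j.1 : ℚ) + 1) ^ 2)
        = 2 * (((n : ℚ) + 1) ^ 2 / ((n : ℚ) - (k.1 : ℚ) + 1)
            - ((n : ℚ) + 1) * ((n : ℚ) + 2) / ((n : ℚ) - (k.1 : ℚ) + 2))
          + ((n : ℚ) + 1) / ((n : ℚ) - (k.1 : ℚ) + 1) := by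
    intro k
    have h := Fin.sum_univ_eq_sum_range
      (fun t => (qq n k.1 t - qq n k.1 (t + 1)) * ((t : ℚ) + 1) ^ 2) n
    refine h.trans ?_
    rw [M2 k.isLt]
    have split : ∀ j ∈ range n, qq n k.1 j * (2 * (j : ℚ) + 1)
        = 2 * ((j : ℚ) * qq n k.1 j) + qq n k.1 j := fun j _ => by ring
    rw [Finset.sum_congr rfl split, Finset.sum_add_distrib, ← Finset.mul_sum,
      S2 k.isLt, S1 k.isLt]
  simp only [EvVal, E2Val]
  have F1 := Fin.sum_univ_eq_sum_range (fun i => ((n : ℚ) + 1) / ((n : ℚ) - i + 1)) n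
  have F2 := Fin.sum_univ_eq_sum_range (fun i =>
    2 * (((n : ℚ) + 1) ^ 2 / ((n : ℚ) - i + 1)
        - ((n : ℚ) + 1) * ((n : ℚ) + 2) / ((n : ℚ) - i + 2))
      + ((n : ℚ) + 1) / ((n : ℚ) - i + 1)
      - (((n : ℚ) + 1) / ((n : ℚ) - i + 1)) ^ 2) n
  rw [F1, F2]
  have sig1 : ∑ i ∈ range n, (1 : ℚ) / ((n : ℚ) - i + 1)
      = (∑ i ∈ range n, (1 : ℚ) / ((i : ℚ) + 1)) + 1 / ((n : ℚ) + 1) - 1 :=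
    (refgen n (fun x => (1 : ℚ) / (x + 1))).trans (sh1 n)
  have sig2 : ∑ i ∈ range n, ((1 : ℚ) / ((n : ℚ) - i + 1)) ^ 2
      = (∑ i ∈ range n, ((1 : ℚ) / ((i : ℚ) + 1)) ^ 2) + (1 / ((n : ℚ) + 1)) ^ 2 - 1 :=
    (refgen n (fun x => ((1 : ℚ) / (x + 1)) ^ 2)).trans (sh2 n)
  have sig3 : ∑ i ∈ range n, (1 : ℚ) / ((n : ℚ) - i + 2)
      = (∑ i ∈ range n, (1 : ℚ) / ((i : ℚ) + 1)) + 1 / ((n : ℚ) + 1) + 1 / ((n : ℚ) + 2)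
        - 3 / 2 :=
    (refgen n (fun x => (1 : ℚ) / (x + 2))).trans (sh3 n)
  have G1 : ∑ i ∈ range n, ((n : ℚ) + 1) / ((n : ℚ) - i + 1)
      = ((n : ℚ) + 1) * (∑ i ∈ range n, (1 : ℚ) / ((n : ℚ) - i + 1)) := by
    rw [Finset.mul_sum]
    exact Finset.sum_congr rfl fun i _ => by rw [mul_one_div]
  have G2 : (∑ i ∈ range n,
        (2 * (((n : ℚ) + 1) ^ 2 / ((n : ℚ) - i + 1)
            - ((n : ℚ) + 1) * ((n : ℚ) + 2) / ((n : ℚ) - i + 2))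
          + ((n : ℚ) + 1) / ((n : ℚ) - i + 1)
          - (((n : ℚ) + 1) / ((n : ℚ) - i + 1)) ^ 2))
      = (2 * ((n : ℚ) + 1) ^ 2 + ((n : ℚ) + 1))
            * (∑ i ∈ range n, (1 : ℚ) / ((n : ℚ) - i + 1))
        - 2 * ((n : ℚ) + 1) * ((n : ℚ) + 2)
            * (∑ i ∈ range n, (1 : ℚ) / ((n : ℚ) - i + 2))
        - ((n : ℚ) + 1) ^ 2 * (∑ i ∈ range n, ((1 : ℚ) / ((n : ℚ) - i + 1)) ^ 2) := by
    rw [Finset.mul_sum, Finset.mul_sum, Finset.mul_sum, ← Finset.sum_sub_distrib,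
      ← Finset.sum_sub_distrib]
    exact Finset.sum_congr rfl fun i _ => by ring
  rw [G1, G2, sig1, sig2, sig3]
  have hI1 : ∑ j ∈ Icc 1 n, (1 : ℚ) / (j : ℚ) = ∑ i ∈ range n, (1 : ℚ) / ((i : ℚ) + 1) := by
    rw [iccToRange n (fun j => (1 : ℚ) / (j : ℚ))]
    exact Finset.sum_congr rfl fun i _ => by push_cast; ring
  have hI2 : ∑ j ∈ Icc 1 n, (1 : ℚ) / ((j : ℚ) ^ 2)
      = ∑ i ∈ range n, ((1 : ℚ) / ((i : ℚ) + 1)) ^ 2 := by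
    rw [iccToRange n (fun j => (1 : ℚ) / ((j : ℚ) ^ 2))]
    exact Finset.sum_congr rfl fun i _ => by rw [div_pow, one_pow]; push_cast; ring
  rw [hI1, hI2]
  have hn1 : (n : ℚ) + 1 ≠ 0 := by positivity
  have hn2 : (n : ℚ) + 2 ≠ 0 := by positivity
  field_simp
  ring
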